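/- Let R_1, …, R_m be a Markov partition for f, and define ∂^s 𝓡 = ⋃_{i=1}^m ∂^s R_i and ∂^u 𝓡 = ⋃_{i=1}^m ∂^u R_i. Then f(∂^s 𝓡) ⊆ ∂^s 𝓡 and f(∂^u 𝓡) ⊇ ∂^u 𝓡. -/

import Mathlib

open Set Filter Metric Topology

variable {M : Type*} [MetricSpace M] [CompactSpace M]

/-- `f` is expansive with expansivity constant `ρ`: if two orbits stay `ρ`-close for all
integer times, the points coincide. -/
def IsExpansiveWith (f : Equiv.Perm M) (ρ : ℝ) : Prop :=
  ∀ x y : M, (∀ n : ℤ, dist ((f ^ n) x) ((f ^ n) y) ≤ ρ) → x = y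

/-- The stable set `W^s(x)`. -/
def stableSet (f : Equiv.Perm M) (x : M) : Set M :=
  {y : M | Tendsto (fun n : ℤ => dist ((f ^ n) x) ((f ^ n) y)) atTop (𝓝 0)}

/-- The unstable set `W^u(x)`. -/
def unstableSet (f : Equiv.Perm M) (x : M) : Set M :=
  {y : M | Tendsto (fun n : ℤ => dist ((f ^ n) x) ((f ^ n) y)) atBot (𝓝 0)}

/-- The `ε`-stable set `W^s_ε(x)`. -/
def epsStable (f : Equiv.Perm M) (ε : ℝ) (x : M) : Set M :=
  {y : M | ∀ n : ℤ, 0 ≤ n → dist ((f ^ n) x) ((f ^ n) y) ≤ ε}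

/-- The `ε`-unstable set `W^u_ε(x)`. -/
def epsUnstable (f : Equiv.Perm M) (ε : ℝ) (x : M) : Set M :=
  {y : M | ∀ n : ℤ, n ≤ 0 → dist ((f ^ n) x) ((f ^ n) y) ≤ ε}

/-- Shadowing property: every `δ`-pseudo-orbit is `ε`-shadowed by a true orbit. -/
def HasShadowing (f : Equiv.Perm M) : Prop :=
  ∀ ε : ℝ, 0 < ε → ∃ δ : ℝ, 0 < δ ∧ ∀ y : ℤ → M,
    (∀ n : ℤ, dist (f (y n)) (y (n + 1)) < δ) →
      ∃ z : M, ∀ n : ℤ, dist ((f ^ n) z) (y n) ≤ ε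

/-- A rectangle: a nonempty set of diameter `< δ` closed under the bracket operation. -/
def IsRectangle (δ : ℝ) (br : M → M → M) (R : Set M) : Prop :=
  R.Nonempty ∧ Metric.diam R < δ ∧ ∀ x ∈ R, ∀ y ∈ R, br x y ∈ R

/-- Stable border `∂^s R`: points of `R` that are not interior points of
`W^u(x,R) = W^u_ε(x) ∩ R` in the subspace topology of `W^u_ε(x)`. -/
def stableBorder (f : Equiv.Perm M) (ε : ℝ) (R : Set M) : Set M :=
  {x : M | x ∈ R ∧ ¬ ∃ U : Set M, IsOpen U ∧ x ∈ U ∧ U ∩ epsUnstable f ε x ⊆ R}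

/-- Unstable border `∂^u R`: points of `R` that are not interior points of
`W^s(x,R) = W^s_ε(x) ∩ R` in the subspace topology of `W^s_ε(x)`. -/
def unstableBorder (f : Equiv.Perm M) (ε : ℝ) (R : Set M) : Set M :=
  {x : M | x ∈ R ∧ ¬ ∃ U : Set M, IsOpen U ∧ x ∈ U ∧ U ∩ epsStable f ε x ⊆ R}

/-- A Markov partition: a finite family of proper rectangles covering `M`, with pairwise
disjoint interiors, satisfying the Markov inclusions for the invariant fibers. -/
def IsMarkovPartition (f : Equiv.Perm M) (ε δ : ℝ) (br : M → M → M) {m : ℕ}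
    (R : Fin m → Set M) : Prop :=
  (∀ i, IsRectangle δ br (R i)) ∧
  (∀ i, R i = closure (interior (R i))) ∧
  (⋃ i, R i) = Set.univ ∧
  (∀ i j, i ≠ j → interior (R i) ∩ interior (R j) = ∅) ∧
  ∀ i j, ∀ x ∈ interior (R i) ∩ ⇑f ⁻¹' interior (R j),
    ⇑f '' (epsStable f ε x ∩ R i) ⊆ epsStable f ε (f x) ∩ R j ∧
    epsUnstable f ε (f x) ∩ R j ⊆ ⇑f '' (epsUnstable f ε x ∩ R i)

section AuxStmt12

set_option linter.unusedSectionVars false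
set_option linter.unusedVariables false

lemma cont_zpow (f : Equiv.Perm M) (hf : Continuous ⇑f) (hf' : Continuous ⇑f.symm) :
    ∀ n : ℤ, Continuous ⇑(f ^ n) := by
  intro n
  induction n using Int.induction_on with
  | zero => simpa using continuous_id
  | succ k ih =>
      have h : (f : Equiv.Perm M) ^ ((k : ℤ) + 1) = f ^ (k : ℤ) * f := zpow_add_one _ _
      rw [h, Equiv.Perm.coe_mul]
      exact ih.comp hf
  | pred k ih =>
      have h : (f : Equiv.Perm M) ^ (-(k : ℤ) - 1) = f ^ (-(k : ℤ)) * f⁻¹ := zpow_sub_one _ _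
      rw [h, Equiv.Perm.coe_mul]
      have h2 : ⇑(f⁻¹) = ⇑f.symm := rfl
      rw [h2]
      exact ih.comp hf'

lemma mem_epsStable_self (f : Equiv.Perm M) {ε : ℝ} (hε : 0 ≤ ε) (x : M) :
    x ∈ epsStable f ε x := fun _ _ => by simp [hε]

lemma mem_epsUnstable_self (f : Equiv.Perm M) {ε : ℝ} (hε : 0 ≤ ε) (x : M) :
    x ∈ epsUnstable f ε x := fun _ _ => by simp [hε]

lemma shift_unstable (f : Equiv.Perm M) {ε : ℝ} {x z : M} (hz : z ∈ epsUnstable f ε x)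
    (h0 : dist (f x) (f z) ≤ ε) : f z ∈ epsUnstable f ε (f x) := by
  intro n hn
  rcases eq_or_lt_of_le hn with h | h
  · subst h; simpa using h0
  · have h1 : n + 1 ≤ 0 := by omega
    have e : ∀ p : M, (f ^ n) (f p) = (f ^ (n + 1)) p := by
      intro p; rw [zpow_add_one]; rfl
    rw [e, e]
    exact hz (n + 1) h1

lemma shift_stable (f : Equiv.Perm M) {ε : ℝ} {y w : M} (hw : w ∈ epsStable f ε y)
    (h0 : dist (f.symm y) (f.symm w) ≤ ε) : f.symm w ∈ epsStable f ε (f.symm y) := by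
  intro n hn
  rcases eq_or_lt_of_le hn with h | h
  · rw [← h]; simpa using h0
  · have h1 : (0 : ℤ) ≤ n - 1 := by omega
    have e : ∀ p : M, (f ^ n) (f.symm p) = (f ^ (n - 1)) p := by
      intro p
      conv_rhs => rw [← Equiv.apply_symm_apply f p]
      have e2 : ∀ q : M, (f ^ (n - 1)) (f q) = (f ^ (n - 1 + 1)) q := by
        intro q; rw [zpow_add_one]; rfl
      rw [e2, sub_add_cancel]
    rw [e, e]
    exact hw (n - 1) h1

lemma limit_bracket (f : Equiv.Perm M) (hf : Continuous ⇑f) (hf' : Continuous ⇑f.symm)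
    {ε δ : ℝ} {a b : M} (as bs w : ℕ → M)
    (ha : Tendsto as atTop (𝓝 a)) (hb : Tendsto bs atTop (𝓝 b))
    (hw : ∀ k, w k ∈ epsStable f ε (as k) ∩ epsUnstable f ε (bs k))
    {S : Set M} (hS : IsClosed S) (hwS : ∀ k, w k ∈ S)
    (br : M → M → M)
    (hbr : ∀ x y : M, dist x y < δ → epsStable f ε x ∩ epsUnstable f ε y = {br x y})
    (hab : dist a b < δ) : br a b ∈ S := by
  obtain ⟨q, hqS, φ, hφ, hq⟩ := hS.isCompact.tendsto_subseq hwS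
  have haφ : Tendsto (fun k => as (φ k)) atTop (𝓝 a) := ha.comp hφ.tendsto_atTop
  have hbφ : Tendsto (fun k => bs (φ k)) atTop (𝓝 b) := hb.comp hφ.tendsto_atTop
  have hqs : q ∈ epsStable f ε a := by
    intro n hn
    have h1 : Tendsto (fun k => dist ((f ^ n) (as (φ k))) ((f ^ n) (w (φ k)))) atTop
        (𝓝 (dist ((f ^ n) a) ((f ^ n) q))) :=
      Tendsto.dist (((cont_zpow f hf hf' n).tendsto a).comp haφ)
        (((cont_zpow f hf hf' n).tendsto q).comp hq)
    exact le_of_tendsto h1 (Eventually.of_forall fun k => (hw (φ k)).1 n hn)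
  have hqu : q ∈ epsUnstable f ε b := by
    intro n hn
    have h1 : Tendsto (fun k => dist ((f ^ n) (bs (φ k))) ((f ^ n) (w (φ k)))) atTop
        (𝓝 (dist ((f ^ n) b) ((f ^ n) q))) :=
      Tendsto.dist (((cont_zpow f hf hf' n).tendsto b).comp hbφ)
        (((cont_zpow f hf hf' n).tendsto q).comp hq)
    exact le_of_tendsto h1 (Eventually.of_forall fun k => (hw (φ k)).2 n hn)
  have hmem : q ∈ ({br a b} : Set M) := by
    rw [← hbr a b hab]; exact ⟨hqs, hqu⟩
  rw [mem_singleton_iff] at hmem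
  exact hmem ▸ hqS

lemma dense_interiors {m : ℕ} (R : Fin m → Set M)
    (hprop : ∀ i, R i = closure (interior (R i))) (hcov : (⋃ i, R i) = Set.univ) :
    Dense (⋃ i, interior (R i)) := by
  rw [dense_iff_inter_open]
  rintro U hU ⟨p, hp⟩
  have h1 : p ∈ ⋃ i, R i := hcov ▸ mem_univ p
  obtain ⟨i, hpi⟩ := mem_iUnion.mp h1
  have h2 : p ∈ closure (interior (R i)) := (hprop i) ▸ hpi
  obtain ⟨q, hq1, hq2⟩ := _root_.mem_closure_iff.mp h2 U hU hp
  exact ⟨q, hq1, mem_iUnion.mpr ⟨i, hq2⟩⟩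

lemma approx_pt {m : ℕ} (R : Fin m → Set M)
    (hprop : ∀ i, R i = closure (interior (R i))) (hcov : (⋃ i, R i) = Set.univ)
    (g : Equiv.Perm M) (hg : Continuous ⇑g) (hg' : Continuous ⇑g.symm)
    (i : Fin m) (x : M) (hx : x ∈ R i) (O : Set M) (hO : IsOpen O) (hxO : x ∈ O) :
    ∃ x', x' ∈ O ∧ x' ∈ interior (R i) ∧ ∃ j, g x' ∈ interior (R j) := by
  have h1 : (O ∩ interior (R i)).Nonempty :=
    _root_.mem_closure_iff.mp ((hprop i) ▸ hx) O hO hxO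
  have hopen : IsOpen (⇑g '' (O ∩ interior (R i))) := by
    rw [Equiv.image_eq_preimage_symm]
    exact (hO.inter isOpen_interior).preimage hg'
  have h2 := (dense_interiors R hprop hcov).inter_open_nonempty _ hopen (h1.image _)
  obtain ⟨q, ⟨x', hx', rfl⟩, hq2⟩ := h2
  obtain ⟨j, hj⟩ := mem_iUnion.mp hq2
  exact ⟨x', hx'.1, hx'.2, j, hj⟩

lemma approx_seq {m : ℕ} (R : Fin m → Set M)
    (hprop : ∀ i, R i = closure (interior (R i))) (hcov : (⋃ i, R i) = Set.univ)
    (g : Equiv.Perm M) (hg : Continuous ⇑g) (hg' : Continuous ⇑g.symm)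
    (i : Fin m) (x : M) (hx : x ∈ R i) (r : ℝ) (hr : 0 < r) :
    ∃ (a : ℕ → M) (j : Fin m), Tendsto a atTop (𝓝 x) ∧ (∀ n, a n ∈ interior (R i)) ∧
      (∀ n, g (a n) ∈ interior (R j)) ∧ (∀ n, dist (g (a n)) (g x) < r) := by
  have H : ∀ k : ℕ, ∃ (x' : M) (j : Fin m), dist x' x < 1 / (k + 1) ∧
      dist (g x') (g x) < r ∧ x' ∈ interior (R i) ∧ g x' ∈ interior (R j) := by
    intro k
    have hO : IsOpen (Metric.ball x (1 / (k + 1 : ℝ)) ∩ ⇑g ⁻¹' Metric.ball (g x) r) :=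
      Metric.isOpen_ball.inter (Metric.isOpen_ball.preimage hg)
    have hxO : x ∈ Metric.ball x (1 / (k + 1 : ℝ)) ∩ ⇑g ⁻¹' Metric.ball (g x) r := by
      constructor
      · exact Metric.mem_ball_self (by positivity)
      · exact Metric.mem_ball_self hr
    obtain ⟨x', hO', hint, j, hj⟩ := approx_pt R hprop hcov g hg hg' i x hx _ hO hxO
    exact ⟨x', j, hO'.1, hO'.2, hint, hj⟩
  choose b j hb1 hb2 hb3 hb4 using H
  have hfreq : ∃ j0 : Fin m, ∃ᶠ k in atTop, j k = j0 := by
    by_contra h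
    push_neg at h
    have h2 : ∀ᶠ k in atTop, ∀ j0, j k ≠ j0 :=
      eventually_all.mpr fun j0 => (h j0)
    obtain ⟨k, hk⟩ := h2.exists
    exact hk (j k) rfl
  obtain ⟨j0, hj0⟩ := hfreq
  obtain ⟨φ, hφ, hjφ⟩ := Filter.extraction_of_frequently_atTop hj0
  refine ⟨fun n => b (φ n), j0, ?_, fun n => hb3 (φ n), fun n => hjφ n ▸ hb4 (φ n),
    fun n => hb2 (φ n)⟩
  rw [tendsto_iff_dist_tendsto_zero]
  apply squeeze_zero (fun n => dist_nonneg) (g := fun n : ℕ => 1 / (n + 1 : ℝ))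
  · intro n
    refine le_trans (hb1 (φ n)).le ?_
    apply one_div_le_one_div_of_le (by positivity)
    have h3 : n ≤ φ n := hφ.le_apply
    have h4 : (n : ℝ) ≤ (φ n : ℝ) := Nat.cast_le.mpr h3
    linarith
  · exact tendsto_one_div_add_atTop_nhds_zero_nat

end AuxStmt12

/-- For a Markov partition, `f(∂^s 𝓡) ⊆ ∂^s 𝓡` and `f(∂^u 𝓡) ⊇ ∂^u 𝓡`, where
`∂^s 𝓡 = ⋃ ∂^s R_i` and `∂^u 𝓡 = ⋃ ∂^u R_i`. -/
theorem stmt_12 (f : Equiv.Perm M) (hf : Continuous ⇑f) (hf' : Continuous ⇑f.symm)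
    (ρ ε δ : ℝ) (hρ : 0 < ρ) (hexp : IsExpansiveWith f ρ)
    (hε0 : 0 < ε) (hε : ε ≤ ρ / 4) (hδ : 0 < δ) (br : M → M → M)
    (hbr : ∀ x y : M, dist x y < δ → epsStable f ε x ∩ epsUnstable f ε y = {br x y})
    {m : ℕ} (R : Fin m → Set M) (hMP : IsMarkovPartition f ε δ br R) :
    ⇑f '' (⋃ i, stableBorder f ε (R i)) ⊆ (⋃ i, stableBorder f ε (R i)) ∧
    (⋃ i, unstableBorder f ε (R i)) ⊆ ⇑f '' (⋃ i, unstableBorder f ε (R i)) := by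
  
  obtain ⟨hrect, hprop, hcov, hdisj, hMark⟩ := hMP
  have hcl : ∀ i, IsClosed (R i) := fun i => (hprop i) ▸ isClosed_closure
  constructor
  · rintro y ⟨x, hx, rfl⟩
    obtain ⟨i, hxi⟩ := mem_iUnion.mp hx
    rw [mem_iUnion]
    by_contra hA
    push_neg at hA
    have hA' : ∀ j, f x ∈ R j →
        ∃ U : Set M, IsOpen U ∧ f x ∈ U ∧ U ∩ epsUnstable f ε (f x) ⊆ R j := by
      intro j hj
      by_contra h
      exact hA j ⟨hj, h⟩
    obtain ⟨a, j0, ha, haint, hfaint, hfadist⟩ :=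
      approx_seq R hprop hcov f hf hf' i x hxi.1 (δ / 2) (by linarith)
    have hfa : Tendsto (fun n => f (a n)) atTop (𝓝 (f x)) := (hf.tendsto x).comp ha
    have hfxj : f x ∈ R j0 :=
      (hcl j0).mem_of_tendsto hfa (Eventually.of_forall fun n => interior_subset (hfaint n))
    obtain ⟨U, hUo, hUx, hUsub⟩ := hA' j0 hfxj
    have hWo : IsOpen (U ∩ Metric.ball (f x) (min ε (δ / 2))) := hUo.inter Metric.isOpen_ball
    have hfxW : f x ∈ U ∩ Metric.ball (f x) (min ε (δ / 2)) :=
      ⟨hUx, Metric.mem_ball_self (lt_min hε0 (by linarith))⟩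
    refine hxi.2 ⟨⇑f ⁻¹' (U ∩ Metric.ball (f x) (min ε (δ / 2))), hWo.preimage hf, hfxW, ?_⟩
    rintro z ⟨hzV, hzu⟩
    have hd1 : dist (f z) (f x) < min ε (δ / 2) := by
      simpa [Metric.mem_ball] using hzV.2
    have hdε : dist (f x) (f z) ≤ ε := by
      rw [dist_comm]; exact hd1.le.trans (min_le_left _ _)
    have hfz_unst : f z ∈ epsUnstable f ε (f x) := shift_unstable f hzu hdε
    have hfzRj : f z ∈ R j0 := hUsub ⟨hzV.1, hfz_unst⟩
    have hdn : ∀ n, dist (f z) (f (a n)) < δ := by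
      intro n
      have h2 : dist (f z) (f x) < δ / 2 := lt_of_lt_of_le hd1 (min_le_right _ _)
      have h3 := hfadist n
      calc dist (f z) (f (a n)) ≤ dist (f z) (f x) + dist (f x) (f (a n)) :=
            dist_triangle _ _ _
        _ < δ / 2 + δ / 2 := by rw [dist_comm (f x)]; linarith
        _ = δ := by ring
    have hwmem : ∀ n, br (f z) (f (a n)) ∈
        epsStable f ε (f z) ∩ epsUnstable f ε (f (a n)) := by
      intro n
      rw [hbr (f z) (f (a n)) (hdn n)]
      rfl
    have hwRj : ∀ n, br (f z) (f (a n)) ∈ R j0 := fun n =>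
      (hrect j0).2.2 (f z) hfzRj (f (a n)) (interior_subset (hfaint n))
    have hwS : ∀ n, br (f z) (f (a n)) ∈ ⇑f.symm ⁻¹' (R i) := by
      intro n
      obtain ⟨u, hu, huw⟩ :=
        (hMark i j0 (a n) ⟨haint n, hfaint n⟩).2 ⟨(hwmem n).2, hwRj n⟩
      show f.symm (br (f z) (f (a n))) ∈ R i
      rw [← huw, Equiv.symm_apply_apply]
      exact hu.2
    have hdδ : dist (f z) (f x) < δ :=
      lt_of_lt_of_le hd1 ((min_le_right _ _).trans (by linarith))
    have hkey := limit_bracket f hf hf' (fun _ => f z) (fun n => f (a n))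
      (fun n => br (f z) (f (a n))) tendsto_const_nhds hfa hwmem
      ((hcl i).preimage hf') hwS br hbr hdδ
    have hid : f z ∈ ({br (f z) (f x)} : Set M) := by
      rw [← hbr (f z) (f x) hdδ]
      exact ⟨mem_epsStable_self f hε0.le (f z), hfz_unst⟩
    rw [mem_singleton_iff] at hid
    have hfin : f.symm (f z) ∈ R i := hid ▸ hkey
    simpa using hfin
  · intro y hy
    obtain ⟨jj, hyj⟩ := mem_iUnion.mp hy
    suffices hsuff : ∃ i, f.symm y ∈ unstableBorder f ε (R i) by
      obtain ⟨i, h⟩ := hsuff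
      exact ⟨f.symm y, mem_iUnion.mpr ⟨i, h⟩, Equiv.apply_symm_apply f y⟩
    by_contra hB
    push_neg at hB
    have hB' : ∀ i, f.symm y ∈ R i →
        ∃ V : Set M, IsOpen V ∧ f.symm y ∈ V ∧ V ∩ epsStable f ε (f.symm y) ⊆ R i := by
      intro i hi
      by_contra h
      exact hB i ⟨hi, h⟩
    have hfsymm : Continuous ⇑(f.symm).symm := by rw [Equiv.symm_symm]; exact hf
    obtain ⟨b, i0, hb, hbint, hxsint, hxsdist⟩ :=
      approx_seq R hprop hcov f.symm hf' hfsymm jj y hyj.1 (δ / 2) (by linarith)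
    have hxs : Tendsto (fun n => f.symm (b n)) atTop (𝓝 (f.symm y)) := (hf'.tendsto y).comp hb
    have hxRi : f.symm y ∈ R i0 :=
      (hcl i0).mem_of_tendsto hxs (Eventually.of_forall fun n => interior_subset (hxsint n))
    obtain ⟨V, hVo, hVx, hVsub⟩ := hB' i0 hxRi
    have hWo : IsOpen (V ∩ Metric.ball (f.symm y) (min ε (δ / 2))) :=
      hVo.inter Metric.isOpen_ball
    have hyU : y ∈ ⇑f.symm ⁻¹' (V ∩ Metric.ball (f.symm y) (min ε (δ / 2))) :=
      ⟨hVx, Metric.mem_ball_self (lt_min hε0 (by linarith))⟩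
    refine hyj.2 ⟨⇑f.symm ⁻¹' (V ∩ Metric.ball (f.symm y) (min ε (δ / 2))),
      hWo.preimage hf', hyU, ?_⟩
    rintro w ⟨hwU, hws⟩
    have hd1 : dist (f.symm w) (f.symm y) < min ε (δ / 2) := by
      simpa [Metric.mem_ball] using hwU.2
    have hdε : dist (f.symm y) (f.symm w) ≤ ε := by
      rw [dist_comm]; exact hd1.le.trans (min_le_left _ _)
    have hv_st : f.symm w ∈ epsStable f ε (f.symm y) := shift_stable f hws hdε
    have hvRi : f.symm w ∈ R i0 := hVsub ⟨hwU.1, hv_st⟩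
    have hdn : ∀ n, dist (f.symm (b n)) (f.symm w) < δ := by
      intro n
      have h2 : dist (f.symm y) (f.symm w) < δ / 2 := by
        rw [dist_comm]; exact lt_of_lt_of_le hd1 (min_le_right _ _)
      have h3 := hxsdist n
      calc dist (f.symm (b n)) (f.symm w)
          ≤ dist (f.symm (b n)) (f.symm y) + dist (f.symm y) (f.symm w) := dist_triangle _ _ _
        _ < δ / 2 + δ / 2 := by linarith
        _ = δ := by ring
    have hcmem : ∀ n, br (f.symm (b n)) (f.symm w) ∈
        epsStable f ε (f.symm (b n)) ∩ epsUnstable f ε (f.symm w) := by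
      intro n
      rw [hbr (f.symm (b n)) (f.symm w) (hdn n)]
      rfl
    have hcRi : ∀ n, br (f.symm (b n)) (f.symm w) ∈ R i0 := fun n =>
      (hrect i0).2.2 (f.symm (b n)) (interior_subset (hxsint n)) (f.symm w) hvRi
    have hpre : ∀ n, f.symm (b n) ∈ ⇑f ⁻¹' interior (R jj) := by
      intro n
      show f (f.symm (b n)) ∈ interior (R jj)
      rw [Equiv.apply_symm_apply]
      exact hbint n
    have hcS : ∀ n, br (f.symm (b n)) (f.symm w) ∈ ⇑f ⁻¹' (R jj) := by
      intro n
      have hm := (hMark i0 jj (f.symm (b n)) ⟨hxsint n, hpre n⟩).1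
        ⟨br (f.symm (b n)) (f.symm w), ⟨(hcmem n).1, hcRi n⟩, rfl⟩
      exact hm.2
    have hdδ : dist (f.symm y) (f.symm w) < δ := by
      rw [dist_comm]
      exact lt_of_lt_of_le hd1 ((min_le_right _ _).trans (by linarith))
    have hkey := limit_bracket f hf hf' (fun n => f.symm (b n)) (fun _ => f.symm w)
      (fun n => br (f.symm (b n)) (f.symm w)) hxs tendsto_const_nhds hcmem
      ((hcl jj).preimage hf) hcS br hbr hdδ
    have hid : f.symm w ∈ ({br (f.symm y) (f.symm w)} : Set M) := by
      rw [← hbr (f.symm y) (f.symm w) hdδ]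
      exact ⟨hv_st, mem_epsUnstable_self f hε0.le (f.symm w)⟩
    rw [mem_singleton_iff] at hid
    have hfin : f (f.symm w) ∈ R jj := hid ▸ hkey
    simpa using hfin
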